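/- Let S₀ = {x ∈ F_q^d : x_1²+⋯+x_d² = 0} with d ≡ 2 (mod 4) and q ≡ 3 (mod 4). Then for every α ∈ F_q^d, the normalized Fourier transform satisfies Ŝ₀(α) = (1/q)·δ₀(α) − q^{−(d+2)/2} Σ_{r∈F_q^*} χ(r‖α‖), where δ₀(α) = 1 if α = 0 and 0 otherwise. -/

import Mathlib

open Finset


lemma addChar_map_sum {A M : Type*} [AddCommMonoid A] [CommMonoid M] (χ : AddChar A M)
    {ι : Type*} (s : Finset ι) (f : ι → A) : χ (∑ i ∈ s, f i) = ∏ i ∈ s, χ (f i) := by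
  classical
  induction s using Finset.cons_induction with
  | empty => simp
  | cons a s ha ih =>
      rw [Finset.sum_cons, Finset.prod_cons, AddChar.map_add_eq_mul, ih]

-- Lemma B
lemma sumB {F : Type*} [Field F] [Fintype F] [DecidableEq F]
    (h2 : ringChar F ≠ 2) (χ : AddChar F ℂ) (hχ : χ ≠ 1) {b : F} (hb : b ≠ 0) :
    ∑ s : F, χ (b * s ^ 2) =
      ((quadraticChar F).ringHomComp (Int.castRingHom ℂ)) b *
        gaussSum ((quadraticChar F).ringHomComp (Int.castRingHom ℂ)) χ := by
  set η := (quadraticChar F).ringHomComp (Int.castRingHom ℂ) with hη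
  have hprim : χ.IsPrimitive := AddChar.IsPrimitive.of_ne_one hχ
  have step1 : ∑ s : F, χ (b * s ^ 2)
      = ∑ a : F, ((quadraticChar F a : ℂ) + 1) * χ (b * a) := by
    rw [← Finset.sum_fiberwise (univ : Finset F) (fun s : F => s ^ 2)
      (fun s => χ (b * s ^ 2))]
    refine Finset.sum_congr rfl fun a _ => ?_
    rw [Finset.sum_congr rfl (fun s hs => by
      rw [(Finset.mem_filter.mp hs).2]), Finset.sum_const, nsmul_eq_mul]
    congr 1
    have h := quadraticChar_card_sqrts h2 a
    have hcard : (univ.filter fun s : F => s ^ 2 = a).card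
        = {x : F | x ^ 2 = a}.toFinset.card := by
      congr 1; ext x; simp
    rw [hcard]
    exact_mod_cast h
  rw [step1]
  have expand : ∀ a : F, ((quadraticChar F a : ℂ) + 1) * χ (b * a)
      = η a * χ (b * a) + χ (b * a) := by
    intro a; rw [hη]; simp [MulChar.ringHomComp_apply]; ring
  simp_rw [expand, Finset.sum_add_distrib]
  have hzero : ∑ a : F, χ (b * a) = 0 := by
    have : ∀ a : F, χ (b * a) = χ.mulShift b a := fun a => rfl
    simp_rw [this]
    exact AddChar.sum_eq_zero_of_ne_one (hprim hb)
  rw [hzero, add_zero]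
  -- now ∑ a, η a * χ (b * a) = η b * gaussSum η χ
  have hgs := gaussSum_mulShift η χ (Units.mk0 b hb)
  have hmul : gaussSum η (χ.mulShift (Units.mk0 b hb)) = ∑ a : F, η a * χ (b * a) := by
    simp [gaussSum, AddChar.mulShift_apply]
  have hb2 : η b * η b = 1 := by
    rw [hη]
    simp only [MulChar.ringHomComp_apply]
    rw [show ((Int.castRingHom ℂ) ((quadraticChar F) b)) = ((quadraticChar F b : ℤ) : ℂ) from rfl,
      ← Int.cast_mul, ← pow_two, quadraticChar_sq_one hb]
    norm_num
  calc ∑ a : F, η a * χ (b * a) = (η b * η b) * ∑ a : F, η a * χ (b * a) := by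
        rw [hb2, one_mul]
    _ = η b * (η b * gaussSum η (χ.mulShift (Units.mk0 b hb))) := by rw [hmul]; ring
    _ = η b * gaussSum η χ := by rw [show ((Units.mk0 b hb : Fˣ) : F) = b from rfl] at hgs ⊢; rw [hgs]

-- Lemma C: complete the square
lemma sumC {F : Type*} [Field F] [Fintype F] [DecidableEq F]
    (h2 : ringChar F ≠ 2) (χ : AddChar F ℂ) (hχ : χ ≠ 1) {r : F} (hr : r ≠ 0) (a : F) :
    ∑ t : F, χ (r * t ^ 2 - a * t) =
      χ (-(a ^ 2 / (4 * r))) * (((quadraticChar F).ringHomComp (Int.castRingHom ℂ)) r *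
        gaussSum ((quadraticChar F).ringHomComp (Int.castRingHom ℂ)) χ) := by
  have h2' : (2 : F) ≠ 0 := Ring.two_ne_zero h2
  have h4 : (4 : F) ≠ 0 := by
    have : (4 : F) = 2 * 2 := by norm_num
    rw [this]; exact mul_ne_zero h2' h2'
  have key : ∀ s : F, r * (s + a / (2 * r)) ^ 2 - a * (s + a / (2 * r))
      = r * s ^ 2 + -(a ^ 2 / (4 * r)) := by
    intro s
    field_simp
    ring
  calc ∑ t : F, χ (r * t ^ 2 - a * t)
      = ∑ s : F, χ (r * (s + a / (2 * r)) ^ 2 - a * (s + a / (2 * r))) :=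
        (Fintype.sum_equiv (Equiv.addRight (a / (2 * r))) _ _ (fun s => rfl)).symm
    _ = ∑ s : F, χ (-(a ^ 2 / (4 * r))) * χ (r * s ^ 2) := by
        refine Finset.sum_congr rfl fun s _ => ?_
        rw [key s, AddChar.map_add_eq_mul, mul_comm]
    _ = χ (-(a ^ 2 / (4 * r))) * ∑ s : F, χ (r * s ^ 2) := by rw [← Finset.mul_sum]
    _ = _ := by rw [sumB h2 χ hχ hr]

-- Lemma D
lemma sumD {F : Type*} [Field F] [Fintype F] [DecidableEq F]
    (h2 : ringChar F ≠ 2) (χ : AddChar F ℂ) (hχ : χ ≠ 1) {r : F} (hr : r ≠ 0)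
    (d : ℕ) (α : Fin d → F) :
    ∑ x : Fin d → F, χ (r * (∑ i, (x i) ^ 2) - ∑ i, α i * x i) =
      χ (-((∑ i, (α i) ^ 2) / (4 * r))) *
        (((quadraticChar F).ringHomComp (Int.castRingHom ℂ)) r *
          gaussSum ((quadraticChar F).ringHomComp (Int.castRingHom ℂ)) χ) ^ d := by
  set C := ((quadraticChar F).ringHomComp (Int.castRingHom ℂ)) r *
    gaussSum ((quadraticChar F).ringHomComp (Int.castRingHom ℂ)) χ with hC
  have harg : ∀ x : Fin d → F, r * (∑ i, (x i) ^ 2) - ∑ i, α i * x i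
      = ∑ i, (r * (x i) ^ 2 - α i * x i) := by
    intro x
    rw [Finset.mul_sum, ← Finset.sum_sub_distrib]
  calc ∑ x : Fin d → F, χ (r * (∑ i, (x i) ^ 2) - ∑ i, α i * x i)
      = ∑ x : Fin d → F, ∏ i, χ (r * (x i) ^ 2 - α i * x i) := by
        refine Finset.sum_congr rfl fun x _ => ?_
        rw [harg x, addChar_map_sum]
    _ = ∏ i, ∑ t : F, χ (r * t ^ 2 - α i * t) := (Fintype.prod_sum (fun (i : Fin d) (t : F) => χ (r * t ^ 2 - α i * t))).symm
    _ = ∏ i, (χ (-((α i) ^ 2 / (4 * r))) * C) := by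
        refine Finset.prod_congr rfl fun i _ => ?_
        rw [sumC h2 χ hχ hr (α i), hC]
    _ = (∏ i, χ (-((α i) ^ 2 / (4 * r)))) * C ^ d := by
        rw [Finset.prod_mul_distrib, Finset.prod_const, Finset.card_univ, Fintype.card_fin]
    _ = _ := by
        rw [← addChar_map_sum]
        congr 2
        simp [neg_div, Finset.sum_div]

/-- Fourier transform of the zero sphere in `F_q^d` for `d ≡ 2 (mod 4)`, `q ≡ 3 (mod 4)`:
`Ŝ₀(α) = (1/q)δ₀(α) − q^{−(d+2)/2} ∑_{r≠0} χ(r‖α‖)`. -/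
theorem stmt_9 {F : Type*} [Field F] [Fintype F] [DecidableEq F]
    (hodd : Odd (Fintype.card F)) (hq : Fintype.card F % 4 = 3)
    (χ : AddChar F ℂ) (hχ : χ ≠ 1)
    (d : ℕ) (hd : d % 4 = 2) (hd6 : 6 ≤ d)
    (α : Fin d → F) :
    ((Fintype.card F : ℂ) ^ d)⁻¹ *
        ∑ x ∈ Finset.univ.filter (fun x : Fin d → F => ∑ i, (x i) ^ 2 = 0),
          χ (-(∑ i, α i * x i)) =
      (Fintype.card F : ℂ)⁻¹ * (if α = 0 then 1 else 0) -
        ((Fintype.card F : ℂ) ^ ((d + 2) / 2))⁻¹ *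
          ∑ r ∈ Finset.univ.filter (fun r : F => r ≠ 0), χ (r * ∑ i, (α i) ^ 2) := by
  obtain ⟨k, hk⟩ : ∃ k, d = 4 * k + 2 := ⟨d / 4, by omega⟩
  have h2 : ringChar F ≠ 2 := by
    intro h
    have := FiniteField.even_card_iff_char_two.mp h
    rw [Nat.odd_iff] at hodd
    omega
  have hprim : χ.IsPrimitive := AddChar.IsPrimitive.of_ne_one hχ
  set η := (quadraticChar F).ringHomComp (Int.castRingHom ℂ) with hηdef
  set Q := (Fintype.card F : ℂ) with hQdef
  have hQ : Q ≠ 0 := Nat.cast_ne_zero.mpr Fintype.card_ne_zero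
  have hη_ne : η ≠ 1 :=
    (MulChar.ringHomComp_ne_one_iff Int.cast_injective).mpr (quadraticChar_ne_one h2)
  have hquad : η.IsQuadratic := (quadraticChar_isQuadratic F).comp _
  have hg2 : gaussSum η χ ^ 2 = -Q := by
    rw [gaussSum_sq hη_ne hquad hprim]
    have : quadraticChar F (-1) = -1 := by
      rw [quadraticChar_neg_one h2, ZMod.χ₄_nat_eq_if_mod_four]
      rw [if_neg (by omega), if_neg (by omega)]
    simp only [hηdef, MulChar.ringHomComp_apply, this]
    simp
    exact hQdef.symm
  have hgd : gaussSum η χ ^ d = -(Q ^ (2 * k + 1)) := by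
    rw [show d = 2 * (2 * k + 1) by omega, pow_mul, hg2,
      Odd.neg_pow ⟨k, by ring⟩]
  have hε : ∀ r : F, r ≠ 0 → (η r) ^ d = 1 := by
    intro r hr
    rw [show d = 2 * (2 * k + 1) by omega, pow_mul]
    have : (η r) ^ 2 = 1 := by
      rw [hηdef]
      simp only [MulChar.ringHomComp_apply]
      rw [show ((Int.castRingHom ℂ) ((quadraticChar F) r)) ^ 2
          = (((quadraticChar F r) ^ 2 : ℤ) : ℂ) by push_cast; rfl]
      rw [quadraticChar_sq_one hr]
      norm_num
    rw [this, one_pow]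
  set S := ∑ x ∈ Finset.univ.filter (fun x : Fin d → F => ∑ i, (x i) ^ 2 = 0),
    χ (-(∑ i, α i * x i)) with hSdef
  set Sg := ∑ r ∈ Finset.univ.filter (fun r : F => r ≠ 0), χ (r * ∑ i, (α i) ^ 2) with hSgdef
  set N := ∑ i, (α i) ^ 2 with hNdef
  set f : F → ℂ := fun r => ∑ x : Fin d → F, χ (r * (∑ i, (x i) ^ 2) - ∑ i, α i * x i)
    with hfdef
  -- computing the total sum by swapping
  have hswap : ∑ r : F, f r = Q * S := by
    rw [hfdef]
    simp only
    rw [Finset.sum_comm]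
    have inner : ∀ x : Fin d → F,
        (∑ r : F, χ (r * (∑ i, (x i) ^ 2) - ∑ i, α i * x i))
          = (if (∑ i, (x i) ^ 2) = 0 then Q else 0) * χ (-(∑ i, α i * x i)) := by
      intro x
      have : ∀ r : F, χ (r * (∑ i, (x i) ^ 2) - ∑ i, α i * x i)
          = χ (r * (∑ i, (x i) ^ 2)) * χ (-(∑ i, α i * x i)) := fun r => by
        rw [← AddChar.map_add_eq_mul, sub_eq_add_neg]
      simp_rw [this]
      rw [← Finset.sum_mul, AddChar.sum_mulShift _ hprim]
      split_ifs <;> simp [hQdef]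
    simp_rw [inner]
    rw [hSdef, Finset.sum_filter, Finset.mul_sum]
    refine Finset.sum_congr rfl fun x _ => ?_
    split_ifs <;> simp
  -- the r = 0 term
  have hzero : f 0 = Q ^ d * (if α = 0 then 1 else 0) := by
    rw [hfdef]
    simp only [zero_mul, zero_sub]
    have : ∀ x : Fin d → F, χ (-∑ i, α i * x i) = ∏ i, χ (x i * (-(α i))) := by
      intro x
      rw [← addChar_map_sum]
      congr 1
      rw [← Finset.sum_neg_distrib]
      exact Finset.sum_congr rfl fun i _ => by ring
    simp_rw [this]
    rw [← Fintype.prod_sum (fun (i : Fin d) (t : F) => χ (t * (-(α i))))]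
    have : ∀ i : Fin d, (∑ t : F, χ (t * (-(α i)))) = if α i = 0 then Q else 0 := by
      intro i
      rw [AddChar.sum_mulShift _ hprim]
      simp [neg_eq_zero, hQdef]
    simp_rw [this]
    by_cases hα : α = 0
    · simp [hα, Finset.prod_const]
    · rw [if_neg hα, mul_zero]
      obtain ⟨i, hi⟩ : ∃ i, α i ≠ 0 := by
        by_contra h
        push_neg at h
        exact hα (funext h)
      exact Finset.prod_eq_zero (Finset.mem_univ i) (if_neg hi)
  -- the r ≠ 0 terms
  have hnonzero : ∑ r ∈ Finset.univ.filter (fun r : F => r ≠ 0), f r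
      = -(Q ^ (2 * k + 1)) * Sg := by
    have step : ∀ r ∈ Finset.univ.filter (fun r : F => r ≠ 0),
        f r = χ (-(N / (4 * r))) * (-(Q ^ (2 * k + 1))) := by
      intro r hr
      have hr0 : r ≠ 0 := (Finset.mem_filter.mp hr).2
      rw [hfdef]
      simp only
      rw [sumD h2 χ hχ hr0 d α, mul_pow, hε r hr0, one_mul, hgd, ← hNdef]
    rw [Finset.sum_congr rfl step, ← Finset.sum_mul, mul_comm]
    congr 1
    -- substitution r ↦ -(4r)⁻¹
    refine Finset.sum_nbij' (fun r => -(4 * r)⁻¹) (fun s => -(4 * s)⁻¹) ?_ ?_ ?_ ?_ ?_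
    · intro a ha
      have ha0 : a ≠ 0 := (Finset.mem_filter.mp ha).2
      simp only [Finset.mem_filter, Finset.mem_univ, true_and]
      have h4 : (4 : F) ≠ 0 := by
        have h2' : (2 : F) ≠ 0 := Ring.two_ne_zero h2
        have : (4 : F) = 2 * 2 := by norm_num
        rw [this]; exact mul_ne_zero h2' h2'
      exact neg_ne_zero.mpr (inv_ne_zero (mul_ne_zero h4 ha0))
    · intro a ha
      have ha0 : a ≠ 0 := (Finset.mem_filter.mp ha).2
      simp only [Finset.mem_filter, Finset.mem_univ, true_and]
      have h4 : (4 : F) ≠ 0 := by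
        have h2' : (2 : F) ≠ 0 := Ring.two_ne_zero h2
        have : (4 : F) = 2 * 2 := by norm_num
        rw [this]; exact mul_ne_zero h2' h2'
      exact neg_ne_zero.mpr (inv_ne_zero (mul_ne_zero h4 ha0))
    · intro a ha
      have ha0 : a ≠ 0 := (Finset.mem_filter.mp ha).2
      have h4 : (4 : F) ≠ 0 := by
        have h2' : (2 : F) ≠ 0 := Ring.two_ne_zero h2
        have : (4 : F) = 2 * 2 := by norm_num
        rw [this]; exact mul_ne_zero h2' h2'
      field_simp
    · intro a ha
      have ha0 : a ≠ 0 := (Finset.mem_filter.mp ha).2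
      have h4 : (4 : F) ≠ 0 := by
        have h2' : (2 : F) ≠ 0 := Ring.two_ne_zero h2
        have : (4 : F) = 2 * 2 := by norm_num
        rw [this]; exact mul_ne_zero h2' h2'
      field_simp
    · intro a ha
      have ha0 : a ≠ 0 := (Finset.mem_filter.mp ha).2
      have h4 : (4 : F) ≠ 0 := by
        have h2' : (2 : F) ≠ 0 := Ring.two_ne_zero h2
        have : (4 : F) = 2 * 2 := by norm_num
        rw [this]; exact mul_ne_zero h2' h2'
      congr 1
      field_simp
      rw [hNdef]
  -- assemble
  have hsplit : ∑ r : F, f r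
      = f 0 + ∑ r ∈ Finset.univ.filter (fun r : F => r ≠ 0), f r := by
    rw [Finset.filter_ne' Finset.univ (0 : F)]
    exact (Finset.add_sum_erase Finset.univ f (Finset.mem_univ 0)).symm
  have key : Q * S = Q ^ d * (if α = 0 then (1:ℂ) else 0) - Q ^ (2 * k + 1) * Sg := by
    rw [← hswap, hsplit, hzero, hnonzero]
    ring
  have hQd : Q ^ d = Q ^ (4 * k + 2) := by rw [hk]
  have hS : S = Q ^ (4 * k + 1) * (if α = 0 then (1:ℂ) else 0) - Q ^ (2 * k) * Sg := by
    apply mul_left_cancel₀ hQ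
    rw [key, hQd]
    ring
  have hexp : (d + 2) / 2 = 2 * k + 2 := by omega
  rw [hexp, hS, hQd]
  by_cases hα : α = 0
  · rw [if_pos hα]
    field_simp
    ring
  · rw [if_neg hα]
    field_simp
    ring
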